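/- For Ising spins s_i ∈ {-1,+1} on a cycle of length n with BP beliefs parameterized by magnetizations m̆_i ∈ (-1,1) and susceptibilities χ̆_i via b_i(s) = (1 + m̆_i s)/2 and b_i(s,t) = (1 + m̆_i s + m̆_{i+1} t + (m̆_i m̆_{i+1} + χ̆_i) s t)/4, define Q = Π_{i=1}^n χ̆_i / √((1-m̆_i²)(1-m̆_{i+1}²)). Then the normalization constant of the BP cycle factorization equals Z_BP = 1 + Q. -/

import Mathlib

open scoped BigOperators

/-- The value ±1 of an Ising spin encoded by a Boolean. -/
noncomputable def spin (t : Bool) : ℝ := if t then 1 else -1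

/-- Single-site BP belief with magnetization `m`. -/
noncomputable def bS (m s : ℝ) : ℝ := (1 + m * s) / 2

/-- Pairwise BP belief with magnetizations `m1, m2` and susceptibility `χ`. -/
noncomputable def bP (m1 m2 χ s t : ℝ) : ℝ :=
  (1 + m1 * s + m2 * t + (m1 * m2 + χ) * s * t) / 4

lemma bS_pos' {m : ℝ} (hm : |m| < 1) (s : Bool) : 0 < bS m (spin s) := by
  rcases abs_lt.mp hm with ⟨h1, h2⟩
  cases s <;> simp [bS, spin] <;> linarith

lemma factor_eq' (m1 m2 c s t : ℝ) (h1 : bS m1 s ≠ 0) (h2 : bS m2 t ≠ 0) :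
    bP m1 m2 c s t / (bS m1 s * bS m2 t) * bS m1 s
      = c / 4 * s * (t / bS m2 t) + bS m1 s := by
  have key : bP m1 m2 c s t = bS m1 s * bS m2 t + c * s * t / 4 := by
    unfold bP bS; ring
  rw [key]; field_simp; ring

open Fin.NatCast in
lemma shift_closed' {n : ℕ} [NeZero n] (S : Finset (Fin n))
    (h : ∀ j, j ∈ S → j + 1 ∈ S) (hne : S.Nonempty) : S = Finset.univ := by
  obtain ⟨j₀, hj₀⟩ := hne
  have key : ∀ k : ℕ, j₀ + (k : Fin n) ∈ S := by
    intro k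
    induction k with
    | zero => simpa using hj₀
    | succ k ih =>
      have : ((k + 1 : ℕ) : Fin n) = (k : Fin n) + 1 := by push_cast; ring
      rw [this, ← add_assoc]; exact h _ ih
  ext i
  simp only [Finset.mem_univ, iff_true]
  have := key ((i - j₀).val)
  rwa [Fin.cast_val_eq_self, add_sub_cancel] at this

lemma sum_bS' (mj : ℝ) : ∑ b : Bool, bS mj (spin b) = 1 := by
  simp [bS, spin]; ring

lemma sum_cross_zero' (mj c : ℝ) (h : |mj| < 1) :
    ∑ b : Bool, bS mj (spin b) * (c / 4 * (spin b / bS mj (spin b))) = 0 := by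
  rcases abs_lt.mp h with ⟨h1, h2⟩
  have hp : (1 : ℝ) + mj * 1 ≠ 0 := by intro h; linarith
  have hq : (1 : ℝ) + mj * (-1) ≠ 0 := by intro h; linarith
  have h8p : (8 : ℝ) + mj * 8 ≠ 0 := by intro h; linarith
  have h8m : (8 : ℝ) - mj * 8 ≠ 0 := by intro h; linarith
  rw [Fintype.sum_bool]
  simp only [spin, if_true, if_false, Bool.false_eq_true, bS]
  have hp' : (1 : ℝ) + mj ≠ 0 := by intro h; linarith
  have hq' : (1 : ℝ) - mj ≠ 0 := by intro h; linarith
  rw [show (1:ℝ) + mj * -1 = 1 - mj by ring]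
  field_simp
  ring

lemma sum_diag' (mj c : ℝ) (h : |mj| < 1) :
    ∑ b : Bool, spin b * (c / 4 * (spin b / bS mj (spin b))) = c / (1 - mj ^ 2) := by
  rcases abs_lt.mp h with ⟨h1, h2⟩
  have hp : (1 : ℝ) + mj * 1 ≠ 0 := by intro h; linarith
  have hq : (1 : ℝ) + mj * (-1) ≠ 0 := by intro h; linarith
  have hq2 : (1 : ℝ) - mj ^ 2 ≠ 0 := by nlinarith
  have h4p : (4 : ℝ) + mj * 4 ≠ 0 := by intro h; linarith
  have h4m : (4 : ℝ) - mj * 4 ≠ 0 := by intro h; linarith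
  rw [Fintype.sum_bool]
  simp only [spin, if_true, if_false, Bool.false_eq_true, bS]
  have hp' : (1 : ℝ) + mj ≠ 0 := by intro h; linarith
  have hq' : (1 : ℝ) - mj ≠ 0 := by intro h; linarith
  rw [show (1:ℝ) + mj * -1 = 1 - mj by ring]
  field_simp
  ring

/-- For Ising spins on a cycle of length `n` with BP beliefs
parameterized by magnetizations `m̆_i ∈ (-1,1)` and susceptibilities `χ̆_i`, the
normalization constant of the BP cycle factorization equals `Z_BP = 1 + Q`, where
`Q = Π_i χ̆_i / √((1-m̆_i²)(1-m̆_{i+1}²))`. -/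
theorem stmt_6 (n : ℕ) [NeZero n] (m χ : Fin n → ℝ)
    (hm : ∀ i, |m i| < 1)
    (hnn : ∀ (i : Fin n) (s t : Bool),
      0 ≤ bP (m i) (m (i + 1)) (χ i) (spin s) (spin t)) :
    (∑ σ : Fin n → Bool,
        (∏ i, bP (m i) (m (i + 1)) (χ i) (spin (σ i)) (spin (σ (i + 1)))
            / (bS (m i) (spin (σ i)) * bS (m (i + 1)) (spin (σ (i + 1)))))
          * ∏ i, bS (m i) (spin (σ i)))
      = 1 + ∏ i, χ i / Real.sqrt ((1 - (m i) ^ 2) * (1 - (m (i + 1)) ^ 2)) := by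
  classical
  clear hnn
  have hbne : ∀ (i : Fin n) (s : Bool), bS (m i) (spin s) ≠ 0 :=
    fun i s => (bS_pos' (hm i) s).ne'
  have hm2 : ∀ i, (0:ℝ) < 1 - m i ^ 2 := by
    intro i
    rcases abs_lt.mp (hm i) with ⟨h1, h2⟩
    nlinarith
  set e := (Equiv.addRight (1 : Fin n)).toEmbedding with he
  set G : Finset (Fin n) → Fin n → Bool → ℝ := fun S j b =>
    (if j ∈ S then spin b else bS (m j) (spin b))
      * (if j ∈ S.map e then χ (j - 1) / 4 * (spin b / bS (m j) (spin b)) else 1)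
    with hG
  calc (∑ σ : Fin n → Bool,
        (∏ i, bP (m i) (m (i + 1)) (χ i) (spin (σ i)) (spin (σ (i + 1)))
            / (bS (m i) (spin (σ i)) * bS (m (i + 1)) (spin (σ (i + 1)))))
          * ∏ i, bS (m i) (spin (σ i)))
      = ∑ S : Finset (Fin n), ∑ σ : Fin n → Bool,
          (∏ i ∈ S, (χ i / 4 * spin (σ i) * (spin (σ (i+1)) / bS (m (i+1)) (spin (σ (i+1))))))
            * ∏ i ∈ Sᶜ, bS (m i) (spin (σ i)) := by
        rw [Finset.sum_comm]
        refine Finset.sum_congr rfl fun σ _ => ?_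
        rw [← Finset.prod_mul_distrib]
        rw [show (∏ i, (bP (m i) (m (i + 1)) (χ i) (spin (σ i)) (spin (σ (i + 1)))
                  / (bS (m i) (spin (σ i)) * bS (m (i + 1)) (spin (σ (i + 1))))
                * bS (m i) (spin (σ i))))
            = ∏ i, (χ i / 4 * spin (σ i) * (spin (σ (i+1)) / bS (m (i+1)) (spin (σ (i+1))))
                + bS (m i) (spin (σ i))) from
          Finset.prod_congr rfl fun i _ => factor_eq' _ _ _ _ _ (hbne i _) (hbne (i+1) _)]
        exact Fintype.prod_add _ _
    _ = ∑ S : Finset (Fin n), ∏ j, ∑ b : Bool, G S j b := by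
        refine Finset.sum_congr rfl fun S _ => ?_
        rw [Fintype.prod_sum]
        refine Finset.sum_congr rfl fun σ _ => ?_
        have hsplit : ∀ (x y : Fin n → ℝ),
            ∏ j, (if j ∈ S then x j else y j) = (∏ j ∈ S, x j) * ∏ j ∈ Sᶜ, y j := by
          intro x y
          rw [Finset.prod_ite, Finset.filter_mem_eq_inter, Finset.univ_inter]
          congr 2
          ext j; simp
        calc (∏ i ∈ S, (χ i / 4 * spin (σ i) * (spin (σ (i+1)) / bS (m (i+1)) (spin (σ (i+1))))))
                * ∏ i ∈ Sᶜ, bS (m i) (spin (σ i))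
            = ((∏ i ∈ S, spin (σ i)) *
                ∏ i ∈ S, (χ ((i+1) - 1) / 4 * (spin (σ (i+1)) / bS (m (i+1)) (spin (σ (i+1))))))
                * ∏ i ∈ Sᶜ, bS (m i) (spin (σ i)) := by
              rw [← Finset.prod_mul_distrib]
              congr 1
              refine Finset.prod_congr rfl fun i _ => ?_
              rw [add_sub_cancel_right]; ring
          _ = ((∏ i ∈ S, spin (σ i)) *
                ∏ j ∈ S.map e,
                  (χ (j - 1) / 4 * (spin (σ j) / bS (m j) (spin (σ j)))))
                * ∏ i ∈ Sᶜ, bS (m i) (spin (σ i)) := by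
              rw [Finset.prod_map]; rfl
          _ = ∏ j, G S j (σ j) := by
              symm
              rw [hG]
              rw [Finset.prod_mul_distrib,
                hsplit (fun j => spin (σ j)) (fun j => bS (m j) (spin (σ j)))]
              rw [show (∏ j, (if j ∈ S.map e then
                      χ (j - 1) / 4 * (spin (σ j) / bS (m j) (spin (σ j))) else 1))
                  = ∏ j ∈ S.map e,
                      (χ (j - 1) / 4 * (spin (σ j) / bS (m j) (spin (σ j)))) by
                rw [Finset.prod_ite_mem, Finset.univ_inter]]
              ring
    _ = (∏ j, ∑ b : Bool, G ∅ j b) + (∏ j, ∑ b : Bool, G Finset.univ j b) := by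
        refine Finset.sum_eq_add_of_mem ∅ Finset.univ (Finset.mem_univ _) (Finset.mem_univ _)
          (by simpa using (Finset.univ_nonempty (α := Fin n)).ne_empty.symm) ?_
        intro S _ ⟨hS0, hSu⟩
        -- S ≠ ∅, S ≠ univ ⇒ S.map e ≠ S
        have hne : S.map e ≠ S := by
          intro hmap
          apply hSu
          refine shift_closed' S (fun j hj => ?_) (Finset.nonempty_iff_ne_empty.mpr hS0)
          rw [← hmap]
          exact Finset.mem_map_of_mem e hj
        have hcard : (S.map e).card = S.card := Finset.card_map e
        have hnsub : ¬ S.map e ⊆ S := by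
          intro hsub
          exact hne (Finset.eq_of_subset_of_card_le hsub (le_of_eq hcard.symm))
        obtain ⟨j, hjmap, hjS⟩ := Finset.not_subset.mp hnsub
        refine Finset.prod_eq_zero (Finset.mem_univ j) ?_
        have : ∀ b : Bool, G S j b
            = bS (m j) (spin b) * (χ (j - 1) / 4 * (spin b / bS (m j) (spin b))) := by
          intro b
          rw [hG]
          simp only [hjS, hjmap, if_false, if_true]
        rw [Finset.sum_congr rfl fun b _ => this b]
        exact sum_cross_zero' (m j) (χ (j - 1)) (hm j)
    _ = 1 + ∏ j, χ (j - 1) / (1 - m j ^ 2) := by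
        congr 1
        · have h1 : ∀ j : Fin n, ∑ b : Bool, G ∅ j b = 1 := by
            intro j
            have : ∀ b : Bool, G ∅ j b = bS (m j) (spin b) := by
              intro b; rw [hG]; simp
            rw [Finset.sum_congr rfl fun b _ => this b]
            exact sum_bS' (m j)
          rw [Finset.prod_congr rfl fun j _ => h1 j, Finset.prod_const_one]
        · refine Finset.prod_congr rfl fun j _ => ?_
          have : ∀ b : Bool, G Finset.univ j b
              = spin b * (χ (j - 1) / 4 * (spin b / bS (m j) (spin b))) := by
            intro b; rw [hG]
            simp [Finset.map_univ_equiv]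
          rw [Finset.sum_congr rfl fun b _ => this b]
          exact sum_diag' (m j) (χ (j - 1)) (hm j)
    _ = 1 + ∏ i, χ i / Real.sqrt ((1 - (m i) ^ 2) * (1 - (m (i + 1)) ^ 2)) := by
        congr 1
        have hs : ∀ i : Fin n, Real.sqrt ((1 - (m i) ^ 2) * (1 - (m (i + 1)) ^ 2))
            = Real.sqrt (1 - m i ^ 2) * Real.sqrt (1 - m (i+1) ^ 2) := fun i =>
          Real.sqrt_mul (hm2 i).le _
        rw [Finset.prod_div_distrib, Finset.prod_div_distrib]
        congr 1
        · exact Equiv.prod_comp (Equiv.subRight (1 : Fin n)) χ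
        · rw [Finset.prod_congr rfl fun i _ => hs i, Finset.prod_mul_distrib,
            Fintype.prod_equiv (Equiv.addRight (1 : Fin n))
              (fun x => Real.sqrt (1 - m (x + 1) ^ 2)) (fun j => Real.sqrt (1 - m j ^ 2))
              (fun x => rfl),
            ← Finset.prod_mul_distrib]
          exact (Finset.prod_congr rfl fun j _ => (Real.mul_self_sqrt (hm2 j).le).symm)
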